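/- Let N be a matroid on a finite ground set E with rank function r and rank k = r(E) ≥ 1, let B be a base of N, and let z : E → [0,1] satisfy ∑_{e∈S} z_e ≤ r(S)/2 for every S ⊆ E. Let D be a random subset of E obtained by including each element e independently with probability z_e. Then there exists an element e ∈ B such that Pr[e ∉ span(D ∖ {e})] ≥ 1/2. -/

import Mathlib

open scoped BigOperators Classical

/-- The rank function of a matroid: `mrank M S` is the maximum cardinality of an
independent subset of `S`. -/
noncomputable def mrank {α : Type*} (M : Matroid α) (S : Set α) : ℕ :=
  sSup {n : ℕ | ∃ I : Finset α, ↑I ⊆ S ∧ M.Indep ↑I ∧ I.card = n}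

section Aux

variable {α : Type*} [Fintype α] [DecidableEq α]

/-- Total probability is 1. -/
lemma aux_total (z : α → ℝ) :
    ∑ D : Finset α, (∏ a ∈ D, z a) * (∏ a ∈ Dᶜ, (1 - z a)) = 1 := by
  have h := Finset.prod_add z (fun a => 1 - z a) (Finset.univ : Finset α)
  simp only [add_sub_cancel, Finset.prod_const_one, Finset.powerset_univ] at h
  simp only [Finset.compl_eq_univ_sdiff]
  exact h.symm

/-- Marginal probability of containing `e` is `z e`. -/
lemma aux_marginal (z : α → ℝ) (e : α) :
    ∑ D : Finset α, (∏ a ∈ D, z a) * (∏ a ∈ Dᶜ, (1 - z a)) *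
      (if e ∈ D then (1:ℝ) else 0) = z e := by
  have h := Finset.prod_add z (fun a => if a = e then 0 else 1 - z a)
      (Finset.univ : Finset α)
  have hL : ∏ a : α, (z a + if a = e then 0 else 1 - z a) = z e := by
    rw [Finset.prod_eq_single e]
    · simp
    · intro b _ hb; simp [hb]
    · simp
  rw [hL, Finset.powerset_univ] at h
  rw [h]
  apply Finset.sum_congr rfl
  intro D _
  rw [Finset.compl_eq_univ_sdiff]
  by_cases heD : e ∈ D
  · rw [if_pos heD, mul_one]
    congr 1
    apply Finset.prod_congr rfl
    intro a ha
    have : a ≠ e := by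
      intro h'; subst h'; exact (Finset.mem_compl.mp ha) heD
    simp [this]
  · rw [if_neg heD, mul_zero]
    exact (mul_eq_zero_of_right _ (Finset.prod_eq_zero
      (Finset.mem_sdiff.mpr ⟨Finset.mem_univ e, heD⟩) (by simp))).symm

end Aux

theorem exists_base_element_often_unspanned
    {α : Type*} [Fintype α] [DecidableEq α] (N : Matroid α) (hE : N.E = Set.univ)
    (hk : 1 ≤ mrank N Set.univ)
    (B : Finset α) (hB : N.IsBase ↑B)
    (z : α → ℝ) (hz : ∀ e, 0 ≤ z e ∧ z e ≤ 1)
    (hzP : ∀ S : Finset α, ∑ e ∈ S, z e ≤ (mrank N ↑S : ℝ) / 2) :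
    ∃ e ∈ B, (1 : ℝ) / 2 ≤
      ∑ D : Finset α, (∏ a ∈ D, z a) * (∏ a ∈ Dᶜ, (1 - z a)) *
        (if e ∈ N.closure ↑(D.erase e) then 0 else 1) := by
  classical
  set w : Finset α → ℝ := fun D => (∏ a ∈ D, z a) * (∏ a ∈ Dᶜ, (1 - z a)) with hw
  have hw0 : ∀ D, 0 ≤ w D := by
    intro D
    apply mul_nonneg
    · exact Finset.prod_nonneg fun a _ => (hz a).1
    · exact Finset.prod_nonneg fun a _ => by linarith [(hz a).2]
  have hground : ∀ (X : Set α), X ⊆ N.E := fun X => by rw [hE]; exact Set.subset_univ X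
  -- any independent finset has card ≤ B.card
  have hindep_card : ∀ I : Finset α, N.Indep ↑I → I.card ≤ B.card := by
    intro I hI
    obtain ⟨B', hB', hIB'⟩ := hI.exists_isBase_superset
    have h1 : (↑I : Set α).encard ≤ (↑B' : Set α).encard := Set.encard_le_encard hIB'
    have h2 : (↑B' : Set α).encard = (↑B : Set α).encard := hB'.encard_eq_encard_of_isBase hB
    rw [h2, Set.encard_coe_eq_coe_finsetCard, Set.encard_coe_eq_coe_finsetCard] at h1
    exact_mod_cast h1
  -- mrank of any set is ≤ B.card
  have hmrank_le : ∀ S : Set α, mrank N S ≤ B.card := by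
    intro S
    have h0 : (0:ℕ) ∈ {n : ℕ | ∃ I : Finset α, ↑I ⊆ S ∧ N.Indep ↑I ∧ I.card = n} :=
      ⟨∅, by simp, by simp, by simp⟩
    apply csSup_le ⟨0, h0⟩
    rintro n ⟨I, _, hI, rfl⟩
    exact hindep_card I hI
  -- B is nonempty
  have hBne : B.Nonempty := by
    rw [← Finset.card_pos]
    exact lt_of_lt_of_le hk (hmrank_le Set.univ)
  -- counting: for each D, the number of e ∈ B with e ∈ closure (D.erase e) is ≤ D.card
  have hcount : ∀ D : Finset α,
      (∑ e ∈ B, (if e ∈ N.closure ↑(D.erase e) then (1:ℝ) else 0)) ≤ D.card := by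
    intro D
    set T : Finset α := B.filter (fun e => e ∈ N.closure ↑(D.erase e)) with hT
    have hsum : (∑ e ∈ B, (if e ∈ N.closure ↑(D.erase e) then (1:ℝ) else 0)) = T.card := by
      rw [hT, Finset.card_filter]
      push_cast
      rfl
    rw [hsum]
    have hTcard : T.card ≤ D.card := by
      have hTindep : N.Indep ↑T := hB.indep.subset (by
        intro x hx
        simp only [hT, Finset.coe_filter, Set.mem_setOf_eq] at hx
        exact hx.1)
      have hTcl : (↑T : Set α) ⊆ N.closure ↑D := by
        intro x hx
        simp only [hT, Finset.coe_filter, Set.mem_setOf_eq] at hx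
        exact N.closure_subset_closure (by
          simp only [Finset.coe_subset]
          exact Finset.erase_subset x D) hx.2
      obtain ⟨I, hI⟩ := N.exists_isBasis ↑D (hground _)
      obtain ⟨J, hJ, hTJ⟩ := hTindep.subset_isBasis_of_subset hTcl (hground _)
      have hIcl : N.IsBasis I (N.closure ↑D) := hI.isBasis_closure_right
      have hJI : J.encard = I.encard := hJ.encard_eq_encard hIcl
      have h1 : (↑T : Set α).encard ≤ J.encard := Set.encard_le_encard hTJ
      have h2 : I.encard ≤ (↑D : Set α).encard := Set.encard_le_encard hI.subset
      rw [hJI] at h1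
      have := h1.trans h2
      rw [Set.encard_coe_eq_coe_finsetCard, Set.encard_coe_eq_coe_finsetCard] at this
      exact_mod_cast this
    exact_mod_cast hTcard
  -- expected size: ∑ D, w D * D.card = ∑ e, z e
  have hexp : ∑ D : Finset α, w D * D.card = ∑ e : α, z e := by
    have : ∀ D : Finset α, (D.card : ℝ) = ∑ e : α, (if e ∈ D then (1:ℝ) else 0) := by
      intro D
      rw [Finset.sum_ite_mem, Finset.univ_inter, Finset.sum_const, nsmul_eq_mul, mul_one]
    calc ∑ D : Finset α, w D * D.card
        = ∑ D : Finset α, ∑ e : α, w D * (if e ∈ D then (1:ℝ) else 0) := by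
          apply Finset.sum_congr rfl; intro D _; rw [this D, Finset.mul_sum]
      _ = ∑ e : α, ∑ D : Finset α, w D * (if e ∈ D then (1:ℝ) else 0) :=
          Finset.sum_comm
      _ = ∑ e : α, z e := by
          apply Finset.sum_congr rfl; intro e _; exact aux_marginal z e
  -- key bound on total spanning probability
  have hkey : ∑ e ∈ B, (∑ D : Finset α, w D *
      (if e ∈ N.closure ↑(D.erase e) then (1:ℝ) else 0)) ≤ (B.card : ℝ) / 2 := by
    have h1 : ∑ e ∈ B, (∑ D : Finset α, w D *
        (if e ∈ N.closure ↑(D.erase e) then (1:ℝ) else 0))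
        = ∑ D : Finset α, w D * (∑ e ∈ B, (if e ∈ N.closure ↑(D.erase e) then (1:ℝ) else 0)) := by
      rw [Finset.sum_comm]
      apply Finset.sum_congr rfl
      intro D _
      rw [Finset.mul_sum]
    rw [h1]
    have h2 : ∑ D : Finset α, w D * (∑ e ∈ B, (if e ∈ N.closure ↑(D.erase e) then (1:ℝ) else 0))
        ≤ ∑ D : Finset α, w D * D.card := by
      apply Finset.sum_le_sum
      intro D _
      exact mul_le_mul_of_nonneg_left (hcount D) (hw0 D)
    have h3 : ∑ e : α, z e ≤ (B.card : ℝ) / 2 := by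
      have := hzP Finset.univ
      rw [Finset.coe_univ] at this
      refine this.trans ?_
      have : (mrank N Set.univ : ℝ) ≤ (B.card : ℝ) := by exact_mod_cast hmrank_le Set.univ
      linarith
    calc _ ≤ ∑ D : Finset α, w D * D.card := h2
      _ = ∑ e : α, z e := hexp
      _ ≤ (B.card : ℝ) / 2 := h3
  -- averaging: some e ∈ B has spanning probability ≤ 1/2
  have havg : ∃ e ∈ B, (∑ D : Finset α, w D *
      (if e ∈ N.closure ↑(D.erase e) then (1:ℝ) else 0)) ≤ 1 / 2 := by
    by_contra hcon
    push_neg at hcon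
    have : (B.card : ℝ) / 2 < ∑ e ∈ B, (∑ D : Finset α, w D *
        (if e ∈ N.closure ↑(D.erase e) then (1:ℝ) else 0)) := by
      have := Finset.sum_lt_sum_of_nonempty hBne (fun e he => hcon e he)
      simp only [Finset.sum_const, nsmul_eq_mul] at this
      calc (B.card : ℝ) / 2 = ∑ _e ∈ B, (1:ℝ)/2 := by
            rw [Finset.sum_const, nsmul_eq_mul]; ring
        _ < _ := Finset.sum_lt_sum_of_nonempty hBne (fun e he => hcon e he)
    linarith [hkey]
  obtain ⟨e, heB, hpe⟩ := havg
  refine ⟨e, heB, ?_⟩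
  have hsplit : ∑ D : Finset α, w D * (if e ∈ N.closure ↑(D.erase e) then (0:ℝ) else 1)
      = (∑ D : Finset α, w D) - ∑ D : Finset α, w D *
        (if e ∈ N.closure ↑(D.erase e) then (1:ℝ) else 0) := by
    rw [← Finset.sum_sub_distrib]
    apply Finset.sum_congr rfl
    intro D _
    split_ifs with h' <;> ring
  have htot : ∑ D : Finset α, w D = 1 := aux_total z
  calc (1:ℝ)/2 ≤ 1 - ∑ D : Finset α, w D *
        (if e ∈ N.closure ↑(D.erase e) then (1:ℝ) else 0) := by linarith
    _ = ∑ D : Finset α, w D * (if e ∈ N.closure ↑(D.erase e) then (0:ℝ) else 1) := by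
        rw [hsplit, htot]
    _ = _ := rfl
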